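/- arXiv:2604.18344 — 3 statements merged into one kernel-verified Lean document; each statement's English description precedes it below -/
import Mathlib

section
/- Let S be a finite type, μ a probability mass function on S, and K_1,…,K_T : S → PMF(S) Markov kernels defining the forward chain with joint law q(x_{0:T}) = μ(x_0)·∏_{t=1}^T K_t(x_{t-1})(x_t) on S^{T+1}; let q_t denote the marginal of q at time t. Suppose the generative (reverse) chain has joint law p(x_{0:T}) = q_T(x_T)·∏_{t=1}^T R_t(x_t)(x_{t-1}), where for every t, every x_t with q_t(x_t) > 0, and every x_{t-1}, R_t(x_t)(x_{t-1}) equals the true reverse conditional q(x_{t-1} | x_t). Then the two joint laws coincide: p(x_{0:T}) = q(x_{0:T}) for every trajectory (x_0,…,x_T) ∈ S^{T+1}. -/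
open Finset

private lemma int_coord {S : Type} [Fintype S] [DecidableEq S] [Nonempty S] {n : ℕ}
    (i : Fin n) (F : (Fin n → S) → ℝ)
    (hF : ∀ x v, F (Function.update x i v) = F x)
    (w : (Fin n → S) → S → ℝ)
    (hw : ∀ x, ∑ v, w x v = 1)
    (hwi : ∀ x v u, w (Function.update x i v) u = w x u) :
    (Fintype.card S : ℝ) * ∑ x, F x * w x (x i) = ∑ x, F x := by
  classical
  obtain ⟨u0⟩ := ‹Nonempty S›
  set e := Equiv.funSplitAt i S with he
  have hei : ∀ (v : S) (r : {j : Fin n // j ≠ i} → S), e.symm (v, r) i = v := by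
    intro v r; simp [he]
  have hupd : ∀ (v : S) (r : {j : Fin n // j ≠ i} → S),
      e.symm (v, r) = Function.update (e.symm (u0, r)) i v := by
    intro v r
    funext j
    by_cases h : j = i
    · subst h; simp [he]
    · simp [he, Function.update_of_ne h, Equiv.funSplitAt, Equiv.piSplitAt, h]
  have h1 : ∀ (A : (Fin n → S) → ℝ), ∑ x, A x = ∑ v : S, ∑ r, A (e.symm (v, r)) := by
    intro A
    rw [← e.symm.sum_comp A, Fintype.sum_prod_type]
  rw [h1 (fun x => F x * w x (x i)), h1 F]
  have h2 : ∀ v r, F (e.symm (v, r)) * w (e.symm (v, r)) (e.symm (v, r) i)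
      = F (e.symm (u0, r)) * w (e.symm (u0, r)) v := by
    intro v r
    rw [hei, hupd v r, hF, hwi]
  simp_rw [h2]
  rw [Finset.sum_comm]
  have h3 : ∀ r, ∑ v : S, F (e.symm (u0, r)) * w (e.symm (u0, r)) v
      = F (e.symm (u0, r)) := by
    intro r; rw [← Finset.mul_sum, hw, mul_one]
  simp_rw [h3]
  have h4 : ∀ v : S, ∑ r, F (e.symm (v, r)) = ∑ r, F (e.symm (u0, r)) := by
    intro v; congr 1; funext r; rw [hupd v r, hF]
  simp_rw [h4]
  rw [Finset.sum_const, card_univ, nsmul_eq_mul]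

private lemma sum_coord {S : Type} [Fintype S] [DecidableEq S] {n : ℕ}
    (i : Fin (n + 1)) (F : S → ℝ) :
    ∑ x : Fin (n + 1) → S, F (x i) = (Fintype.card S : ℝ) ^ n * ∑ v, F v := by
  classical
  set e := Equiv.funSplitAt i S with he
  have hei : ∀ (v : S) (r : {j : Fin (n+1) // j ≠ i} → S), e.symm (v, r) i = v := by
    intro v r; simp [he]
  rw [← e.symm.sum_comp (fun x => F (x i)), Fintype.sum_prod_type]
  simp_rw [hei]
  rw [Finset.sum_comm]
  rw [Finset.sum_const, card_univ, nsmul_eq_mul]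
  have : Fintype.card ({j : Fin (n+1) // j ≠ i} → S) = Fintype.card S ^ n := by
    rw [Fintype.card_fun]
    congr 1
    rw [Fintype.card_subtype_compl, Fintype.card_subtype_eq, Fintype.card_fin]
    simp
  rw [this]
  push_cast
  ring

private lemma chain_sum_aux {S : Type} [Fintype S] [DecidableEq S] [Nonempty S]
    {T : ℕ} (K : Fin T → S → S → ℝ) (hK1 : ∀ t x, ∑ y, K t x y = 1) (d : ℕ) :
    ∀ (m : ℕ) (g : (Fin (T + 1) → S) → ℝ), m ≤ T → T - m = d →
    (∀ (i : Fin (T + 1)) (x : Fin (T + 1) → S) (v : S), m < (i : ℕ) →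
      g (Function.update x i v) = g x) →
    (Fintype.card S : ℝ) ^ (T - m) *
        ∑ x, g x * ∏ s ∈ univ.filter (fun s : Fin T => m ≤ (s : ℕ)),
          K s (x s.castSucc) (x s.succ)
      = ∑ x, g x := by
  classical
  induction d with
  | zero =>
    intro m g hm hd hg
    have hmT : m = T := by omega
    have : univ.filter (fun s : Fin T => m ≤ (s : ℕ)) = ∅ := by
      ext s
      have := s.isLt
      simp
      omega
    rw [this]
    simp [hd]
  | succ d ih =>
    intro m g hm hd hg
    have hmlt : m < T := by omega
    set i : Fin T := ⟨m, hmlt⟩ with hi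
    have hsplit : univ.filter (fun s : Fin T => m ≤ (s : ℕ))
        = insert i (univ.filter fun s : Fin T => m + 1 ≤ (s : ℕ)) := by
      ext s
      simp [hi, Fin.ext_iff]
      omega
    have hnotmem : i ∉ univ.filter fun s : Fin T => m + 1 ≤ (s : ℕ) := by
      simp [hi]
    set g' : (Fin (T + 1) → S) → ℝ := fun x => g x * K i (x i.castSucc) (x i.succ) with hg'
    have hg'ind : ∀ (i' : Fin (T + 1)) (x : Fin (T + 1) → S) (v : S), m + 1 < (i' : ℕ) →
        g' (Function.update x i' v) = g' x := by
      intro i' x v hi'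
      have h1 : i.castSucc ≠ i' := by
        intro h; rw [Fin.ext_iff] at h; simp [hi] at h; omega
      have h2 : i.succ ≠ i' := by
        intro h; rw [Fin.ext_iff] at h; simp [hi] at h; omega
      simp only [hg', Function.update_of_ne h1, Function.update_of_ne h2,
        hg i' x v (by omega)]
    have hIH := ih (m + 1) g' (by omega) (by omega) hg'ind
    have hint := int_coord i.succ g
      (fun x v => hg i.succ x v (by simp [hi]))
      (fun x v => K i (x i.castSucc) v)
      (fun x => hK1 i (x i.castSucc))
      (fun x v u => by
        have hne : i.castSucc ≠ i.succ := by
          rw [Ne, Fin.ext_iff]; simp [hi]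
        rw [Function.update_of_ne hne])
    have hcast : ∀ x : Fin (T + 1) → S,
        g x * ∏ s ∈ univ.filter (fun s : Fin T => m ≤ (s : ℕ)), K s (x s.castSucc) (x s.succ)
        = g' x * ∏ s ∈ univ.filter (fun s : Fin T => m + 1 ≤ (s : ℕ)),
            K s (x s.castSucc) (x s.succ) := by
      intro x
      rw [hsplit, Finset.prod_insert hnotmem, hg']
      ring
    simp_rw [hcast]
    have hTm : T - m = (T - (m + 1)) + 1 := by omega
    rw [hTm, pow_succ]
    calc (Fintype.card S : ℝ) ^ (T - (m + 1)) * (Fintype.card S : ℝ) *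
          ∑ x, g' x * ∏ s ∈ univ.filter (fun s : Fin T => m + 1 ≤ (s : ℕ)),
            K s (x s.castSucc) (x s.succ)
        = (Fintype.card S : ℝ) * ((Fintype.card S : ℝ) ^ (T - (m + 1)) *
          ∑ x, g' x * ∏ s ∈ univ.filter (fun s : Fin T => m + 1 ≤ (s : ℕ)),
            K s (x s.castSucc) (x s.succ)) := by ring
      _ = (Fintype.card S : ℝ) * ∑ x, g' x := by rw [hIH]
      _ = ∑ x, g x := by
          rw [← hint]

/-- **Joint-distribution form of Theorem 1.**
If every reverse kernel `R t` matches the true reverse conditional of the forward chain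
wherever the time-`t+1` marginal is positive, then the generative joint law `p`
coincides with the forward joint law `q` on every trajectory. -/
theorem reverse_matches_posterior_implies_joint_laws_coincide
    (S : Type) [Fintype S] [DecidableEq S] (T : ℕ)
    (μ : S → ℝ) (hμ0 : ∀ x, 0 ≤ μ x) (hμ1 : ∑ x, μ x = 1)
    (K : Fin T → S → S → ℝ)
    (hK0 : ∀ t x y, 0 ≤ K t x y) (hK1 : ∀ t x, ∑ y, K t x y = 1)
    (q : (Fin (T + 1) → S) → ℝ)
    (hq : ∀ x, q x = μ (x 0) * ∏ t : Fin T, K t (x t.castSucc) (x t.succ))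
    (marg : Fin (T + 1) → S → ℝ)
    (hmarg : ∀ t y, marg t y =
      ∑ x ∈ univ.filter (fun x : Fin (T + 1) → S => x t = y), q x)
    (R : Fin T → S → S → ℝ)
    (hR0 : ∀ t x y, 0 ≤ R t x y) (hR1 : ∀ t x, ∑ y, R t x y = 1)
    (hRrev : ∀ (t : Fin T) (y : S), 0 < marg t.succ y → ∀ z : S,
      R t y z =
        (∑ x ∈ univ.filter
            (fun x : Fin (T + 1) → S => x t.castSucc = z ∧ x t.succ = y), q x)
          / marg t.succ y)
    (p : (Fin (T + 1) → S) → ℝ)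
    (hp : ∀ x, p x = marg (Fin.last T) (x (Fin.last T)) *
        ∏ t : Fin T, R t (x t.succ) (x t.castSucc)) :
    ∀ x : Fin (T + 1) → S, p x = q x := by
  classical
  intro x
  haveI : Nonempty S := ⟨x 0⟩
  set c : ℝ := (Fintype.card S : ℝ) with hc
  have hcpos : (0 : ℝ) < c := by
    rw [hc]; exact_mod_cast Fintype.card_pos
  have hqnn : ∀ y, 0 ≤ q y := by
    intro y; rw [hq]
    exact mul_nonneg (hμ0 _) (Finset.prod_nonneg fun t _ => hK0 _ _ _)
  have hmargnn : ∀ t z, 0 ≤ marg t z := by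
    intro t z; rw [hmarg]
    exact Finset.sum_nonneg fun y _ => hqnn y
  set G : Fin (T + 1) → S → (Fin (T + 1) → S) → ℝ := fun t z x' =>
    (if x' t = z then 1 else 0) *
      (μ (x' 0) * ∏ s ∈ univ.filter (fun s : Fin T => (s : ℕ) < (t : ℕ)),
        K s (x' s.castSucc) (x' s.succ)) with hG
  have hGind : ∀ (t : Fin (T + 1)) (z : S) (i : Fin (T + 1)) (x' : Fin (T + 1) → S) (v : S),
      (t : ℕ) < (i : ℕ) → G t z (Function.update x' i v) = G t z x' := by
    intro t z i x' v hti
    have h0 : (0 : Fin (T + 1)) ≠ i := by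
      rw [Ne, Fin.ext_iff]; simp; omega
    have ht : t ≠ i := by
      rw [Ne, Fin.ext_iff]; omega
    rw [hG]
    dsimp only
    rw [Function.update_of_ne ht, Function.update_of_ne h0]
    congr 2
    apply Finset.prod_congr rfl
    intro s hs
    rw [Finset.mem_filter] at hs
    have h1 : s.castSucc ≠ i := by
      rw [Ne, Fin.ext_iff]; simp ; omega
    have h2 : s.succ ≠ i := by
      rw [Ne, Fin.ext_iff]; simp; omega
    rw [Function.update_of_ne h1, Function.update_of_ne h2]
  have hmargG : ∀ (t : Fin (T + 1)) (z : S),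
      c ^ (T - (t : ℕ)) * marg t z = ∑ x', G t z x' := by
    intro t z
    have hsplitq : ∀ x' : Fin (T + 1) → S,
        (if x' t = z then q x' else 0)
          = G t z x' * ∏ s ∈ univ.filter (fun s : Fin T => (t : ℕ) ≤ (s : ℕ)),
              K s (x' s.castSucc) (x' s.succ) := by
      intro x'
      have hprod : (∏ s : Fin T, K s (x' s.castSucc) (x' s.succ))
          = (∏ s ∈ univ.filter (fun s : Fin T => (s : ℕ) < (t : ℕ)),
              K s (x' s.castSucc) (x' s.succ))
            * ∏ s ∈ univ.filter (fun s : Fin T => (t : ℕ) ≤ (s : ℕ)),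
                K s (x' s.castSucc) (x' s.succ) := by
        rw [← Finset.prod_filter_mul_prod_filter_not univ (fun s : Fin T => (s : ℕ) < (t : ℕ))]
        congr 1
        apply Finset.prod_congr _ (fun _ _ => rfl)
        ext s; simp [not_lt]
      rw [hG]
      dsimp only
      by_cases h : x' t = z
      · rw [if_pos h, if_pos h, hq, hprod]; ring
      · rw [if_neg h, if_neg h]; ring
    rw [hmarg, Finset.sum_filter]
    simp_rw [hsplitq]
    exact chain_sum_aux K hK1 (T - (t : ℕ)) (t : ℕ) (G t z)
      (Nat.lt_succ_iff.mp t.isLt) rfl (fun i x' v hi => hGind t z i x' v hi)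
  have hmarg0 : ∀ z, marg 0 z = μ z := by
    intro z
    have h1 := hmargG 0 z
    have h2 : ∀ x' : Fin (T + 1) → S,
        G 0 z x' = (fun v => (if v = z then 1 else 0) * μ v) (x' 0) := by
      intro x'
      have hemp : univ.filter (fun s : Fin T => (s : ℕ) < ((0 : Fin (T + 1)) : ℕ)) = ∅ := by
        ext s; simp
      rw [hG]
      dsimp only
      rw [hemp, Finset.prod_empty, mul_one]
    simp_rw [h2] at h1
    rw [sum_coord (0 : Fin (T + 1)) (fun v => (if v = z then 1 else 0) * μ v)] at h1
    have h3 : ∑ v, (if v = z then 1 else 0) * μ v = μ z := by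
      simp [ite_mul]
    rw [h3, ← hc] at h1
    simp only [Fin.val_zero, Nat.sub_zero] at h1
    exact mul_left_cancel₀ (ne_of_gt (pow_pos hcpos T)) h1
  -- the key Markov identity for the two-slot sums
  have hJ : ∀ (u : Fin T) (z y : S),
      (∑ x' ∈ univ.filter (fun x' : Fin (T + 1) → S => x' u.castSucc = z ∧ x' u.succ = y), q x')
        = K u z y * marg u.castSucc z := by
    intro u z y
    have hu : (u : ℕ) < T := u.isLt
    have hfil : univ.filter (fun s : Fin T => (s : ℕ) < (u : ℕ) + 1)
        = insert u (univ.filter fun s : Fin T => (s : ℕ) < (u : ℕ)) := by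
      ext s; simp [Fin.ext_iff]; omega
    have hnm : u ∉ univ.filter fun s : Fin T => (s : ℕ) < (u : ℕ) := by simp
    have hsplitq : ∀ x' : Fin (T + 1) → S,
        (if x' u.castSucc = z ∧ x' u.succ = y then q x' else 0)
          = (K u z y * ((if x' u.succ = y then 1 else 0) * G u.castSucc z x'))
            * ∏ s ∈ univ.filter (fun s : Fin T => (u : ℕ) + 1 ≤ (s : ℕ)),
                K s (x' s.castSucc) (x' s.succ) := by
      intro x'
      have hprod : (∏ s : Fin T, K s (x' s.castSucc) (x' s.succ))
          = ((∏ s ∈ univ.filter (fun s : Fin T => (s : ℕ) < (u : ℕ)),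
                K s (x' s.castSucc) (x' s.succ))
              * K u (x' u.castSucc) (x' u.succ))
            * ∏ s ∈ univ.filter (fun s : Fin T => (u : ℕ) + 1 ≤ (s : ℕ)),
                K s (x' s.castSucc) (x' s.succ) := by
        rw [← Finset.prod_filter_mul_prod_filter_not univ
          (fun s : Fin T => (s : ℕ) < (u : ℕ) + 1)]
        congr 1
        · rw [hfil, Finset.prod_insert hnm]; ring
        · apply Finset.prod_congr _ (fun _ _ => rfl)
          ext s; simp [not_lt]
      rw [hG]
      dsimp only
      simp only [Fin.coe_castSucc]
      by_cases h1 : x' u.castSucc = z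
      · by_cases h2 : x' u.succ = y
        · rw [if_pos ⟨h1, h2⟩, if_pos h2, if_pos h1, hq, hprod, h1, h2]
          ring
        · rw [if_neg (by tauto), if_neg h2]; ring
      · by_cases h2 : x' u.succ = y
        · rw [if_neg (by tauto), if_neg h1]
          ring
        · rw [if_neg (by tauto), if_neg h2]; ring
    have hgind : ∀ (i : Fin (T + 1)) (x' : Fin (T + 1) → S) (v : S), (u : ℕ) + 1 < (i : ℕ) →
        (K u z y * ((if (Function.update x' i v) u.succ = y then 1 else 0)
            * G u.castSucc z (Function.update x' i v)))
        = K u z y * ((if x' u.succ = y then 1 else 0) * G u.castSucc z x') := by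
      intro i x' v hi
      have hs : u.succ ≠ i := by
        rw [Ne, Fin.ext_iff]; simp; omega
      rw [Function.update_of_ne hs, hGind u.castSucc z i x' v (by simp; omega)]
    have hchain := chain_sum_aux K hK1 (T - ((u : ℕ) + 1)) ((u : ℕ) + 1)
      (fun x' => K u z y * ((if x' u.succ = y then 1 else 0) * G u.castSucc z x'))
      (by omega) rfl (fun i x' v hi => hgind i x' v hi)
    have hint := int_coord (u.succ : Fin (T + 1)) (G u.castSucc z)
      (fun x' v => hGind u.castSucc z u.succ x' v (by simp))
      (fun _ v => if v = y then 1 else 0)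
      (fun _ => by simp)
      (fun _ _ _ => rfl)
    rw [← hc] at hchain hint
    have hmG := hmargG u.castSucc z
    simp only [Fin.coe_castSucc] at hmG
    have hJv : (∑ x' ∈ univ.filter
          (fun x' : Fin (T + 1) → S => x' u.castSucc = z ∧ x' u.succ = y), q x')
        = ∑ x', (K u z y * ((if x' u.succ = y then 1 else 0) * G u.castSucc z x'))
            * ∏ s ∈ univ.filter (fun s : Fin T => (u : ℕ) + 1 ≤ (s : ℕ)),
                K s (x' s.castSucc) (x' s.succ) := by
      rw [Finset.sum_filter]
      exact Finset.sum_congr rfl fun x' _ => hsplitq x'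
    rw [hJv]
    apply mul_left_cancel₀ (ne_of_gt (pow_pos hcpos (T - (u : ℕ))))
    have hpows : c ^ (T - (u : ℕ)) = c ^ (T - ((u : ℕ) + 1)) * c := by
      rw [← pow_succ]; congr 1; omega
    have hsum1 : ∑ x', (K u z y * ((if x' u.succ = y then 1 else 0) * G u.castSucc z x'))
        = K u z y * ∑ x', G u.castSucc z x' * (if x' u.succ = y then 1 else 0) := by
      rw [Finset.mul_sum]
      exact Finset.sum_congr rfl fun x' _ => by ring
    calc c ^ (T - (u : ℕ)) * ∑ x',
            (K u z y * ((if x' u.succ = y then 1 else 0) * G u.castSucc z x'))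
            * ∏ s ∈ univ.filter (fun s : Fin T => (u : ℕ) + 1 ≤ (s : ℕ)),
                K s (x' s.castSucc) (x' s.succ)
        = c * (c ^ (T - ((u : ℕ) + 1)) * ∑ x',
            (K u z y * ((if x' u.succ = y then 1 else 0) * G u.castSucc z x'))
            * ∏ s ∈ univ.filter (fun s : Fin T => (u : ℕ) + 1 ≤ (s : ℕ)),
                K s (x' s.castSucc) (x' s.succ)) := by rw [hpows]; ring
      _ = c * ∑ x', K u z y * ((if x' u.succ = y then 1 else 0) * G u.castSucc z x') := by
          rw [hchain]
      _ = K u z y * (c * ∑ x', G u.castSucc z x' * (if x' u.succ = y then 1 else 0)) := by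
          rw [hsum1]; ring
      _ = K u z y * ∑ x', G u.castSucc z x' := by rw [hint]
      _ = K u z y * (c ^ (T - (u : ℕ)) * marg u.castSucc z) := by rw [hmG]
      _ = c ^ (T - (u : ℕ)) * (K u z y * marg u.castSucc z) := by ring
  -- basic domination of q by the marginals along the trajectory
  have hqle : ∀ t : Fin (T + 1), q x ≤ marg t (x t) := by
    intro t
    rw [hmarg]
    exact Finset.single_le_sum (fun y _ => hqnn y) (by simp)
  by_cases hall : ∀ t : Fin (T + 1), 0 < marg t (x t)
  · -- all marginals positive: telescoping
    have hRfact : ∀ u : Fin T, R u (x u.succ) (x u.castSucc)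
        = K u (x u.castSucc) (x u.succ) * marg u.castSucc (x u.castSucc)
            / marg u.succ (x u.succ) := by
      intro u
      rw [hRrev u _ (hall u.succ), hJ]
    rw [hp, hq]
    rw [Finset.prod_congr rfl fun u _ => hRfact u]
    rw [Finset.prod_div_distrib, Finset.prod_mul_distrib]
    have hA : (∏ u : Fin T, marg u.castSucc (x u.castSucc)) * marg (Fin.last T) (x (Fin.last T))
        = marg 0 (x 0) * ∏ u : Fin T, marg u.succ (x u.succ) := by
      rw [← Fin.prod_univ_castSucc (fun t : Fin (T + 1) => marg t (x t)),
        Fin.prod_univ_succ (fun t : Fin (T + 1) => marg t (x t))]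
    have hne : (∏ u : Fin T, marg u.succ (x u.succ)) ≠ 0 :=
      Finset.prod_ne_zero_iff.mpr fun u _ => (hall u.succ).ne'
    rw [hmarg0] at hA
    field_simp
    linear_combination (∏ u : Fin T, K u (x u.castSucc) (x u.succ)) * hA
  · -- some marginal vanishes
    push_neg at hall
    obtain ⟨t0, ht0⟩ := hall
    have ht0' : marg t0 (x t0) = 0 := le_antisymm ht0 (hmargnn _ _)
    have hq0 : q x = 0 := le_antisymm (ht0' ▸ hqle t0) (hqnn x)
    rw [hq0, hp]
    by_cases hl : marg (Fin.last T) (x (Fin.last T)) = 0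
    · rw [hl, zero_mul]
    · have hlpos : 0 < marg (Fin.last T) (x (Fin.last T)) :=
        lt_of_le_of_ne (hmargnn _ _) (Ne.symm hl)
      set P : ℕ → Prop := fun n => ∃ h : n < T + 1, marg ⟨n, h⟩ (x ⟨n, h⟩) = 0 with hP
      have hPt0 : P (t0 : ℕ) := ⟨t0.isLt, by simpa using ht0'⟩
      set m := Nat.findGreatest P T with hm
      have hPm : P m := Nat.findGreatest_spec (Nat.lt_succ_iff.mp t0.isLt) hPt0
      have hmT : m ≤ T := Nat.findGreatest_le T
      have hmne : m ≠ T := by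
        intro h
        obtain ⟨hh, h0⟩ := hPm
        apply hl
        have : (⟨m, hh⟩ : Fin (T + 1)) = Fin.last T := by
          rw [Fin.ext_iff]; simp [h]
        rwa [this] at h0
      have hmlt : m < T := lt_of_le_of_ne hmT hmne
      set u : Fin T := ⟨m, hmlt⟩ with hu
      have hcs : u.castSucc = (⟨m, Nat.lt_succ_of_lt hmlt⟩ : Fin (T + 1)) := by
        rw [Fin.ext_iff]; simp [hu]
      have h0 : marg u.castSucc (x u.castSucc) = 0 := by
        obtain ⟨hh, h0⟩ := hPm
        rw [hcs]
        convert h0 using 2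
      have hpos : 0 < marg u.succ (x u.succ) := by
        rcases (hmargnn u.succ (x u.succ)).lt_or_eq with h | h
        · exact h
        · exfalso
          have hPm1 : P (m + 1) := by
            refine ⟨by omega, ?_⟩
            have hss : u.succ = (⟨m + 1, by omega⟩ : Fin (T + 1)) := by
              rw [Fin.ext_iff]; simp [hu]
            rw [hss] at h
            exact h.symm
          exact Nat.findGreatest_is_greatest (P := P) (n := T) (show m < m + 1 by omega) (by omega) hPm1
      have hR0' : R u (x u.succ) (x u.castSucc) = 0 := by
        rw [hRrev u _ hpos, hJ, h0, mul_zero, zero_div]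
      rw [Finset.prod_eq_zero (mem_univ u) hR0', mul_zero]
end

section
/- Let P and Q be probability mass functions on a finite type S with Q absolutely continuous with respect to P (P(x) = 0 implies Q(x) = 0), let C ⊆ S with Q(C) = 0, and let L ∈ ℝ satisfy −∑_{x : Q(x)>0} Q(x)·log P(x) ≤ L (i.e., L upper-bounds the expected negative log-likelihood of the model P under the data Q). Then P(C) ≤ √( (L − H(Q)) / 2 ), where H(Q) = −∑_{x : Q(x)>0} Q(x)·log Q(x). -/
open Finset

/-- Elementary inequality: `2 x² ≤ −log (1 − x)` for `0 ≤ x < 1`. -/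
lemma neg_log_ge_two_sq {x : ℝ} (hx : 0 ≤ x) (hx1 : x < 1) :
    2 * x ^ 2 ≤ -Real.log (1 - x) := by
  set f : ℝ → ℝ := fun y => -Real.log (1 - y) - 2 * y ^ 2 with hf
  have hderiv : ∀ y ∈ Set.Ico (0:ℝ) 1, HasDerivAt f ((1 - y)⁻¹ - 4 * y) y := by
    intro y hy
    have h1 : (1:ℝ) - y ≠ 0 := by
      have := hy.2; intro h; linarith [h]
    have hlog : HasDerivAt (fun y : ℝ => Real.log (1 - y)) (-(1 - y)⁻¹) y := by
      have h2 : HasDerivAt (fun y : ℝ => 1 - y) (-1) y := by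
        exact ((hasDerivAt_const y (1:ℝ)).fun_sub (hasDerivAt_id' y)).congr_deriv (by ring)
      exact ((Real.hasDerivAt_log h1).comp y h2).congr_deriv (by ring)
    have hsq : HasDerivAt (fun y : ℝ => 2 * y ^ 2) (4 * y) y := by
      have h := (hasDerivAt_pow 2 y).const_mul (2:ℝ)
      exact h.congr_deriv (by push_cast; ring)
    exact ((hlog.fun_neg).fun_sub hsq).congr_deriv (by ring)
  have hmono : MonotoneOn f (Set.Ico (0:ℝ) 1) := by
    apply monotoneOn_of_deriv_nonneg (convex_Ico 0 1)
    · intro y hy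
      exact ((hderiv y hy).continuousAt).continuousWithinAt
    · intro y hy
      rw [interior_Ico] at hy
      exact ((hderiv y ⟨hy.1.le, hy.2⟩).differentiableAt).differentiableWithinAt
    · intro y hy
      rw [interior_Ico] at hy
      rw [(hderiv y ⟨hy.1.le, hy.2⟩).deriv]
      have h1 : 0 < 1 - y := by linarith [hy.2]
      have key : (1 - y)⁻¹ - 4 * y = (1 - 2*y)^2 / (1 - y) + ((1-y)⁻¹ - (1-y)⁻¹) := by
        field_simp
        ring
      rw [key]
      simp only [sub_self, add_zero]
      positivity
  have h0 : f 0 ≤ f x := hmono ⟨le_refl 0, one_pos⟩ ⟨hx, hx1⟩ hx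
  simp [hf] at h0
  linarith

/-- Concluding bound of Theorem 2: if `Q(C) = 0` and the cross-entropy of `P` under `Q`
is bounded by `L` (e.g. by the VLB objective), then
`P(C) ≤ √((L − H(Q)) / 2)` where `H(Q) = −∑_{Q x > 0} Q x * log (Q x)`. -/
theorem conflict_prob_le_sqrt_vlb_sub_entropy
    (S : Type) [Fintype S]
    (P Q : S → ℝ)
    (hP0 : ∀ x, 0 ≤ P x) (hP1 : ∑ x, P x = 1)
    (hQ0 : ∀ x, 0 ≤ Q x) (hQ1 : ∑ x, Q x = 1)
    (hac : ∀ x, P x = 0 → Q x = 0)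
    (C : Finset S) (hC : ∑ x ∈ C, Q x = 0)
    (L : ℝ)
    (hL : -(∑ x ∈ univ.filter (fun x => 0 < Q x), Q x * Real.log (P x)) ≤ L) :
    ∑ x ∈ C, P x ≤
      Real.sqrt
        ((L - (-(∑ x ∈ univ.filter (fun x => 0 < Q x), Q x * Real.log (Q x)))) / 2) := by
  classical
  set T := univ.filter (fun x => 0 < Q x) with hT
  -- Q vanishes on C
  have hQC : ∀ x ∈ C, Q x = 0 :=
    (Finset.sum_eq_zero_iff_of_nonneg (fun x _ => hQ0 x)).1 hC
  -- Q has total mass 1 on its support T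
  have hQT : ∑ x ∈ T, Q x = 1 := by
    rw [← hQ1]
    apply Finset.sum_subset (Finset.filter_subset _ _)
    intro x _ hx
    have : ¬ 0 < Q x := by
      intro h
      exact hx (Finset.mem_filter.2 ⟨Finset.mem_univ x, h⟩)
    exact le_antisymm (not_lt.1 this) (hQ0 x)
  have hQpos : ∀ x ∈ T, 0 < Q x := fun x hx => (Finset.mem_filter.1 hx).2
  have hPpos : ∀ x ∈ T, 0 < P x := by
    intro x hx
    rcases (hP0 x).lt_or_eq with h | h
    · exact h
    · exact absurd (hac x h.symm) (hQpos x hx).ne'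
  -- T is nonempty
  have hTne : T.Nonempty := by
    rcases T.eq_empty_or_nonempty with h | h
    · rw [h] at hQT; simp at hQT
    · exact h
  set sP := ∑ x ∈ T, P x with hsP
  have hsP_pos : 0 < sP := Finset.sum_pos hPpos hTne
  set p := ∑ x ∈ C, P x with hp
  have hp0 : 0 ≤ p := Finset.sum_nonneg fun x _ => hP0 x
  -- T is disjoint from C, so sP ≤ 1 - p
  have hsub : T ⊆ univ \ C := by
    intro x hx
    refine Finset.mem_sdiff.2 ⟨Finset.mem_univ x, fun hxc => ?_⟩
    exact (hQpos x hx).ne' (hQC x hxc)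
  have hsP_le : sP ≤ 1 - p := by
    have h1 : sP ≤ ∑ x ∈ univ \ C, P x :=
      Finset.sum_le_sum_of_subset_of_nonneg hsub (fun x _ _ => hP0 x)
    have h2 : ∑ x ∈ univ \ C, P x + ∑ x ∈ C, P x = ∑ x, P x :=
      Finset.sum_sdiff (Finset.subset_univ C)
    rw [hP1] at h2
    linarith
  have hp_lt1 : p < 1 := by linarith
  -- Jensen: ∑ Q log(P/Q) ≤ log sP
  have hjen : ∑ x ∈ T, Q x * Real.log (P x / Q x) ≤ Real.log sP := by
    have h := strictConcaveOn_log_Ioi.concaveOn.le_map_sum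
      (t := T) (w := Q) (p := fun x => P x / Q x)
      (fun x hx => (hQ0 x)) hQT
      (fun x hx => Set.mem_Ioi.2 (div_pos (hPpos x hx) (hQpos x hx)))
    simp only [smul_eq_mul] at h
    have hsum : ∑ x ∈ T, Q x * (P x / Q x) = sP := by
      apply Finset.sum_congr rfl
      intro x hx
      rw [mul_comm, div_mul_cancel₀ _ (hQpos x hx).ne']
    rwa [hsum] at h
  -- rewrite ∑ Q log(P/Q) = ∑ Q log P − ∑ Q log Q
  have hsplit : ∑ x ∈ T, Q x * Real.log (P x / Q x)
      = ∑ x ∈ T, Q x * Real.log (P x) - ∑ x ∈ T, Q x * Real.log (Q x) := by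
    rw [← Finset.sum_sub_distrib]
    apply Finset.sum_congr rfl
    intro x hx
    rw [Real.log_div (hPpos x hx).ne' (hQpos x hx).ne']
    ring
  -- chain of inequalities
  have hlogle : Real.log sP ≤ Real.log (1 - p) :=
    Real.log_le_log hsP_pos hsP_le
  have hkey : 2 * p ^ 2 ≤ -Real.log (1 - p) := neg_log_ge_two_sq hp0 hp_lt1
  have hKL : 2 * p ^ 2 ≤
      (∑ x ∈ T, Q x * Real.log (Q x)) - ∑ x ∈ T, Q x * Real.log (P x) := by
    have := hjen
    rw [hsplit] at this
    linarith
  have hfinal : p ^ 2 ≤ (L - (-(∑ x ∈ T, Q x * Real.log (Q x)))) / 2 := by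
    have hLT : -(∑ x ∈ T, Q x * Real.log (P x)) ≤ L := hL
    linarith
  have hy0 : 0 ≤ (L - (-(∑ x ∈ T, Q x * Real.log (Q x)))) / 2 :=
    le_trans (sq_nonneg p) hfinal
  exact (Real.le_sqrt hp0 hy0).2 hfinal
end

section
/- Let S be a finite type, μ a probability mass function on S, and K_1,…,K_T : S → PMF(S) Markov kernels defining the forward chain with joint law q(x_{0:T}) = μ(x_0)·∏_{t=1}^T K_t(x_{t−1})(x_t); suppose q(x_{0:T}) > 0 for all trajectories. Let π be a PMF on S and R_1,…,R_T : S → PMF(S) kernels, all strictly positive, defining the generative law p(x_{0:T}) = π(x_T)·∏_{t=1}^T R_t(x_t)(x_{t−1}). Then the expected log-ratio decomposes as E_q[ log( p(X_{0:T}) / q(X_{1:T} | X_0) ) ] = E_q[ log R_1(X_1)(X_0) ] − ∑_{t=2}^T E_q[ D( q(X_{t−1} ∈ · | X_t, X_0) ‖ R_t(X_t) ) ] − E_{μ}[ D( q(X_T ∈ · | X_0) ‖ π ) ], where all conditional distributions are those of the forward chain, q(X_{1:T}|X_0=x_0) = q(x_{0:T})/μ(x_0), and D(·‖·) denotes the Kullback–Leibler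 divergence between PMFs on S. -/
open Finset

/-- Kullback–Leibler divergence between two mass functions on a finite type:
`D(f‖g) = ∑_{z : f z > 0} f z * log (f z / g z)`. -/
noncomputable def KLdiv {S : Type} [Fintype S] (f g : S → ℝ) : ℝ :=
  ∑ z ∈ Finset.univ.filter (fun z => 0 < f z), f z * Real.log (f z / g z)

section Aux

variable {S : Type} [Fintype S] [DecidableEq S] {T : ℕ}

/-- the tail of the chain sums to one over each prefix-fiber -/
lemma tail_one (K : Fin T → S → S → ℝ) (hK1 : ∀ t x, ∑ y, K t x y = 1) :
    ∀ (dd j : ℕ), j + dd = T → ∀ y : Fin (T + 1) → S,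
      (∑ x ∈ univ.filter (fun x : Fin (T + 1) → S =>
          ∀ i : Fin (T + 1), (i : ℕ) ≤ j → x i = y i),
        ∏ s ∈ univ.filter (fun s : Fin T => j ≤ (s : ℕ)),
          K s (x s.castSucc) (x s.succ)) = 1 := by
  intro dd
  induction dd with
  | zero =>
    intro j hj y
    have h1 : univ.filter (fun x : Fin (T + 1) → S =>
        ∀ i : Fin (T + 1), (i : ℕ) ≤ j → x i = y i) = {y} := by
      ext x
      simp only [mem_filter, mem_univ, true_and, mem_singleton]
      constructor
      · intro h; funext i; exact h i (by have := i.isLt; omega)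
      · rintro rfl; intro i _; rfl
    have h2 : univ.filter (fun s : Fin T => j ≤ (s : ℕ)) = (∅ : Finset (Fin T)) := by
      ext s
      simp only [mem_filter, mem_univ, true_and, notMem_empty, iff_false, not_le]
      have := s.isLt; omega
    rw [h1, h2]
    simp
  | succ dd ih =>
    intro j hj y
    have hjT : j < T := by omega
    set p1 : Fin (T + 1) := ⟨j + 1, by omega⟩ with hp1
    set sj : Fin T := ⟨j, hjT⟩ with hsj
    rw [← Finset.sum_fiberwise (univ.filter (fun x : Fin (T + 1) → S =>
        ∀ i : Fin (T + 1), (i : ℕ) ≤ j → x i = y i)) (fun x => x p1)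
        (fun x => ∏ s ∈ univ.filter (fun s : Fin T => j ≤ (s : ℕ)),
          K s (x s.castSucc) (x s.succ))]
    have key : ∀ c : S,
        (∑ x ∈ (univ.filter (fun x : Fin (T + 1) → S =>
            ∀ i : Fin (T + 1), (i : ℕ) ≤ j → x i = y i)).filter (fun x => x p1 = c),
          ∏ s ∈ univ.filter (fun s : Fin T => j ≤ (s : ℕ)),
            K s (x s.castSucc) (x s.succ)) = K sj (y sj.castSucc) c := by
      intro c
      have hfib : (univ.filter (fun x : Fin (T + 1) → S =>
            ∀ i : Fin (T + 1), (i : ℕ) ≤ j → x i = y i)).filter (fun x => x p1 = c)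
          = univ.filter (fun x : Fin (T + 1) → S =>
            ∀ i : Fin (T + 1), (i : ℕ) ≤ j + 1 → x i = Function.update y p1 c i) := by
        ext x
        simp only [mem_filter, mem_univ, true_and]
        constructor
        · rintro ⟨h1, h2⟩ i hi
          by_cases hij : i = p1
          · subst hij; rw [Function.update_self]; exact h2
          · rw [Function.update_of_ne hij]
            exact h1 i (by
              have : (i : ℕ) ≠ j + 1 := fun hc => hij (Fin.ext hc)
              omega)
        · intro h
          constructor
          · intro i hi
            have hip : i ≠ p1 := by
              intro hc; subst hc; simp [hp1] at hi
            have := h i (by omega)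
            rwa [Function.update_of_ne hip] at this
          · have := h p1 (by simp [hp1])
            rwa [Function.update_self] at this
      rw [hfib]
      have hins : univ.filter (fun s : Fin T => j ≤ (s : ℕ))
          = insert sj (univ.filter (fun s : Fin T => j + 1 ≤ (s : ℕ))) := by
        ext s
        simp only [mem_filter, mem_univ, true_and, mem_insert]
        constructor
        · intro h
          rcases eq_or_lt_of_le h with h' | h'
          · left; exact Fin.ext h'.symm
          · right; omega
        · rintro (rfl | h)
          · simp [hsj]
          · omega
      have hnm : sj ∉ univ.filter (fun s : Fin T => j + 1 ≤ (s : ℕ)) := by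
        simp [hsj]
      have hterm : ∀ x ∈ univ.filter (fun x : Fin (T + 1) → S =>
            ∀ i : Fin (T + 1), (i : ℕ) ≤ j + 1 → x i = Function.update y p1 c i),
          (∏ s ∈ univ.filter (fun s : Fin T => j ≤ (s : ℕ)),
            K s (x s.castSucc) (x s.succ))
          = K sj (y sj.castSucc) c *
            ∏ s ∈ univ.filter (fun s : Fin T => j + 1 ≤ (s : ℕ)),
              K s (x s.castSucc) (x s.succ) := by
        intro x hx
        simp only [mem_filter, mem_univ, true_and] at hx
        rw [hins, Finset.prod_insert hnm]
        congr 1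
        have h1 : x sj.castSucc = y sj.castSucc := by
          have := hx sj.castSucc (by simp [hsj])
          rw [this, Function.update_of_ne]
          intro hc
          have : ((sj.castSucc : Fin (T+1)) : ℕ) = j + 1 := by rw [hc, hp1]
          simp [hsj] at this
        have h2 : x sj.succ = c := by
          have hsp : sj.succ = p1 := by
            apply Fin.ext; simp [hsj, hp1]
          rw [hsp]
          have := hx p1 (by simp [hp1])
          rw [this, Function.update_self]
        rw [h1, h2]
      rw [Finset.sum_congr rfl hterm, ← Finset.mul_sum,
        ih (j + 1) (by omega) (Function.update y p1 c), mul_one]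
    calc (∑ c : S, ∑ x ∈ (univ.filter (fun x : Fin (T + 1) → S =>
            ∀ i : Fin (T + 1), (i : ℕ) ≤ j → x i = y i)).filter (fun x => x p1 = c),
          ∏ s ∈ univ.filter (fun s : Fin T => j ≤ (s : ℕ)),
            K s (x s.castSucc) (x s.succ))
        = ∑ c : S, K sj (y sj.castSucc) c := by
          exact Finset.sum_congr rfl fun c _ => key c
      _ = 1 := hK1 sj (y sj.castSucc)

lemma prefix_weight (μ : S → ℝ) (K : Fin T → S → S → ℝ) (hK1 : ∀ t x, ∑ y, K t x y = 1)
    (q : (Fin (T + 1) → S) → ℝ)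
    (hq : ∀ x, q x = μ (x 0) * ∏ s : Fin T, K s (x s.castSucc) (x s.succ))
    (j : ℕ) (hj : j ≤ T) (y : Fin (T + 1) → S) :
    ∑ x ∈ univ.filter (fun x : Fin (T + 1) → S =>
        ∀ i : Fin (T + 1), (i : ℕ) ≤ j → x i = y i), q x
    = μ (y 0) * ∏ s ∈ univ.filter (fun s : Fin T => (s : ℕ) < j),
        K s (y s.castSucc) (y s.succ) := by
  have hsplit : ∀ x ∈ univ.filter (fun x : Fin (T + 1) → S =>
      ∀ i : Fin (T + 1), (i : ℕ) ≤ j → x i = y i),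
      q x = (μ (y 0) * ∏ s ∈ univ.filter (fun s : Fin T => (s : ℕ) < j),
          K s (y s.castSucc) (y s.succ)) *
        ∏ s ∈ univ.filter (fun s : Fin T => j ≤ (s : ℕ)),
          K s (x s.castSucc) (x s.succ) := by
    intro x hx
    simp only [mem_filter, mem_univ, true_and] at hx
    rw [hq x]
    rw [← Finset.prod_filter_mul_prod_filter_not univ (fun s : Fin T => (s : ℕ) < j)
      (fun s => K s (x s.castSucc) (x s.succ))]
    have hne : univ.filter (fun s : Fin T => ¬ (s : ℕ) < j)
        = univ.filter (fun s : Fin T => j ≤ (s : ℕ)) := by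
      apply Finset.filter_congr; intro s _; simp
    have h0 : μ (x 0) = μ (y 0) := by
      rw [hx 0 (by simp)]
    have hpr : ∏ s ∈ univ.filter (fun s : Fin T => (s : ℕ) < j),
        K s (x s.castSucc) (x s.succ)
        = ∏ s ∈ univ.filter (fun s : Fin T => (s : ℕ) < j),
          K s (y s.castSucc) (y s.succ) := by
      apply Finset.prod_congr rfl
      intro s hs
      simp only [mem_filter, mem_univ, true_and] at hs
      rw [hx s.castSucc (by simp; omega), hx s.succ (by simp [Fin.val_succ]; omega)]
    rw [hne, h0, hpr, mul_assoc]
  rw [Finset.sum_congr rfl hsplit, ← Finset.mul_sum,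
    tail_one K hK1 (T - j) j (by omega) y, mul_one]

lemma first_marginal (μ : S → ℝ) (K : Fin T → S → S → ℝ) (hK1 : ∀ t x, ∑ y, K t x y = 1)
    (q : (Fin (T + 1) → S) → ℝ)
    (hq : ∀ x, q x = μ (x 0) * ∏ s : Fin T, K s (x s.castSucc) (x s.succ))
    (a : S) :
    ∑ x ∈ univ.filter (fun x : Fin (T + 1) → S => x 0 = a), q x = μ a := by
  have h := prefix_weight μ K hK1 q hq 0 (Nat.zero_le T) (fun _ => a)
  have hset : univ.filter (fun x : Fin (T + 1) → S =>
      ∀ i : Fin (T + 1), (i : ℕ) ≤ 0 → x i = (fun _ => a) i)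
      = univ.filter (fun x : Fin (T + 1) → S => x 0 = a) := by
    apply Finset.filter_congr; intro x _
    constructor
    · intro h'; exact h' 0 (by simp)
    · intro h' i hi
      have : i = 0 := Fin.ext (by simpa using hi)
      rw [this]; exact h'
  have hempty : univ.filter (fun s : Fin T => (s : ℕ) < 0) = ∅ := by
    ext s; simp
  rw [hset, hempty] at h
  simpa using h

lemma group_gen (μ : S → ℝ) (K : Fin T → S → S → ℝ) (hK1 : ∀ t x, ∑ y, K t x y = 1)
    (q : (Fin (T + 1) → S) → ℝ)
    (hq : ∀ x, q x = μ (x 0) * ∏ s : Fin T, K s (x s.castSucc) (x s.succ))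
    (d : S) (t : Fin T)
    (P : (Fin (T + 1) → S) → Prop) [DecidablePred P]
    (hP : ∀ x y : Fin (T + 1) → S,
      (∀ i : Fin (T + 1), (i : ℕ) ≤ (t : ℕ) + 1 → x i = y i) → (P x ↔ P y)) :
    ∑ x ∈ univ.filter P, q x
    = ∑ y ∈ univ.filter (fun y : Fin (T + 1) → S =>
        (∀ i : Fin (T + 1), (t : ℕ) + 1 < (i : ℕ) → y i = d) ∧ P y),
        μ (y 0) * ∏ s ∈ univ.filter (fun s : Fin T => (s : ℕ) < (t : ℕ) + 1),
          K s (y s.castSucc) (y s.succ) := by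
  classical
  set j := (t : ℕ) with hjdef
  set ρ : (Fin (T + 1) → S) → (Fin (T + 1) → S) :=
    fun x i => if (i : ℕ) ≤ j + 1 then x i else d with hρ
  rw [← Finset.sum_fiberwise (univ.filter P) ρ q]
  refine Eq.trans ?_ (Finset.sum_filter _ _).symm
  apply Finset.sum_congr rfl
  intro y _
  by_cases hQ : (∀ i : Fin (T + 1), j + 1 < (i : ℕ) → y i = d) ∧ P y
  · rw [if_pos hQ]
    have hset : (univ.filter P).filter (fun x => ρ x = y)
        = univ.filter (fun x : Fin (T + 1) → S =>
            ∀ i : Fin (T + 1), (i : ℕ) ≤ j + 1 → x i = y i) := by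
      ext x
      simp only [mem_filter, mem_univ, true_and]
      constructor
      · rintro ⟨hPx, hxy⟩ i hi
        rw [← hxy]; simp only [hρ]; rw [if_pos hi]
      · intro h
        have hagree : ∀ i : Fin (T + 1), (i : ℕ) ≤ j + 1 → x i = y i := h
        have hxy : ρ x = y := by
          funext i
          by_cases hi : (i : ℕ) ≤ j + 1
          · simp only [hρ]; rw [if_pos hi]; exact hagree i hi
          · simp only [hρ]; rw [if_neg hi]
            exact (hQ.1 i (by omega)).symm
        exact ⟨(hP x y hagree).mpr hQ.2, hxy⟩
    rw [hset]
    exact prefix_weight μ K hK1 q hq (j + 1) (by omega) y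
  · rw [if_neg hQ]
    have hset : (univ.filter P).filter (fun x => ρ x = y) = ∅ := by
      ext x
      simp only [mem_filter, mem_univ, true_and, notMem_empty, iff_false, not_and]
      intro hPx hxy
      apply hQ
      have hagree : ∀ i : Fin (T + 1), (i : ℕ) ≤ j + 1 → x i = y i := by
        intro i hi
        rw [← hxy]; simp only [hρ]; rw [if_pos hi]
      constructor
      · intro i hi
        rw [← hxy]; simp only [hρ]; rw [if_neg (by omega)]
      · exact (hP x y hagree).mp hPx
    rw [hset, Finset.sum_empty]

lemma shift_last (μ : S → ℝ) (K : Fin T → S → S → ℝ) (d : S) (t : Fin T) (a z b c : S) :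
    ∑ y ∈ univ.filter (fun y : Fin (T + 1) → S =>
        (∀ i : Fin (T + 1), (t : ℕ) + 1 < (i : ℕ) → y i = d) ∧
          y 0 = a ∧ y t.castSucc = z ∧ y t.succ = b),
      (μ (y 0) * ∏ s ∈ univ.filter (fun s : Fin T => (s : ℕ) < (t : ℕ)),
        K s (y s.castSucc) (y s.succ))
    = ∑ y ∈ univ.filter (fun y : Fin (T + 1) → S =>
        (∀ i : Fin (T + 1), (t : ℕ) + 1 < (i : ℕ) → y i = d) ∧
          y 0 = a ∧ y t.castSucc = z ∧ y t.succ = c),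
      (μ (y 0) * ∏ s ∈ univ.filter (fun s : Fin T => (s : ℕ) < (t : ℕ)),
        K s (y s.castSucc) (y s.succ)) := by
  have hne0 : (0 : Fin (T + 1)) ≠ t.succ := (Fin.succ_ne_zero t).symm
  have hnec : t.castSucc ≠ t.succ := by
    intro h
    have : ((t.castSucc : Fin (T + 1)) : ℕ) = ((t.succ : Fin (T + 1)) : ℕ) := by rw [h]
    simp [Fin.val_succ] at this
  have hinv : ∀ (u v : S) (y : Fin (T + 1) → S),
      y ∈ univ.filter (fun y : Fin (T + 1) → S =>
        (∀ i : Fin (T + 1), (t : ℕ) + 1 < (i : ℕ) → y i = d) ∧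
          y 0 = a ∧ y t.castSucc = z ∧ y t.succ = u) →
      Function.update y t.succ v ∈ univ.filter (fun y : Fin (T + 1) → S =>
        (∀ i : Fin (T + 1), (t : ℕ) + 1 < (i : ℕ) → y i = d) ∧
          y 0 = a ∧ y t.castSucc = z ∧ y t.succ = v) := by
    intro u v y hy
    simp only [mem_filter, mem_univ, true_and] at hy ⊢
    obtain ⟨hcanon, h0, hz, hu⟩ := hy
    refine ⟨?_, ?_, ?_, Function.update_self _ _ _⟩
    · intro i hi
      rw [Function.update_of_ne (by
        intro hc
        have : (i : ℕ) = (t : ℕ) + 1 := by rw [hc, Fin.val_succ]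
        omega)]
      exact hcanon i hi
    · rw [Function.update_of_ne hne0]; exact h0
    · rw [Function.update_of_ne hnec]; exact hz
  have hval : ∀ (v : S) (y : Fin (T + 1) → S),
      μ ((Function.update y t.succ v) 0) *
        ∏ s ∈ univ.filter (fun s : Fin T => (s : ℕ) < (t : ℕ)),
          K s ((Function.update y t.succ v) s.castSucc) ((Function.update y t.succ v) s.succ)
      = μ (y 0) * ∏ s ∈ univ.filter (fun s : Fin T => (s : ℕ) < (t : ℕ)),
          K s (y s.castSucc) (y s.succ) := by
    intro v y
    rw [Function.update_of_ne hne0]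
    congr 1
    apply Finset.prod_congr rfl
    intro s hs
    simp only [mem_filter, mem_univ, true_and] at hs
    rw [Function.update_of_ne (by
        intro hc
        have := congrArg Fin.val hc
        simp [Fin.val_succ] at this; omega),
      Function.update_of_ne (by
        intro hc
        have := congrArg Fin.val hc
        simp [Fin.val_succ] at this; omega)]
  apply Finset.sum_nbij' (i := fun y => Function.update y t.succ c)
    (j := fun y => Function.update y t.succ b)
  · intro y hy; exact hinv b c y hy
  · intro y hy; exact hinv c b y hy
  · intro y hy
    simp only [mem_filter, mem_univ, true_and] at hy
    rw [Function.update_idem, ← hy.2.2.2, Function.update_eq_self]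
  · intro y hy
    simp only [mem_filter, mem_univ, true_and] at hy
    rw [Function.update_idem, ← hy.2.2.2, Function.update_eq_self]
  · intro y hy
    exact (hval c y).symm

lemma step_marginal (μ : S → ℝ) (K : Fin T → S → S → ℝ) (hK1 : ∀ t x, ∑ y, K t x y = 1)
    (q : (Fin (T + 1) → S) → ℝ)
    (hq : ∀ x, q x = μ (x 0) * ∏ s : Fin T, K s (x s.castSucc) (x s.succ))
    (d : S) (t : Fin T) (a z b : S) :
    (∑ x ∈ univ.filter (fun x : Fin (T + 1) → S =>
        x 0 = a ∧ x t.castSucc = z ∧ x t.succ = b), q x)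
    = (∑ x ∈ univ.filter (fun x : Fin (T + 1) → S =>
        x 0 = a ∧ x t.castSucc = z), q x) * K t z b := by
  classical
  have hc0 : ((0 : Fin (T + 1)) : ℕ) = 0 := rfl
  have hcc : ((t.castSucc : Fin (T + 1)) : ℕ) = (t : ℕ) := by simp
  have hcs : ((t.succ : Fin (T + 1)) : ℕ) = (t : ℕ) + 1 := by simp [Fin.val_succ]
  have hP3 : ∀ x y : Fin (T + 1) → S,
      (∀ i : Fin (T + 1), (i : ℕ) ≤ (t : ℕ) + 1 → x i = y i) →
      ((x 0 = a ∧ x t.castSucc = z ∧ x t.succ = b) ↔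
        (y 0 = a ∧ y t.castSucc = z ∧ y t.succ = b)) := by
    intro x y h
    rw [h 0 (by omega), h t.castSucc (by omega), h t.succ (by omega)]
  have hP2 : ∀ x y : Fin (T + 1) → S,
      (∀ i : Fin (T + 1), (i : ℕ) ≤ (t : ℕ) + 1 → x i = y i) →
      ((x 0 = a ∧ x t.castSucc = z) ↔ (y 0 = a ∧ y t.castSucc = z)) := by
    intro x y h
    rw [h 0 (by omega), h t.castSucc (by omega)]
  rw [group_gen μ K hK1 q hq d t _ hP3, group_gen μ K hK1 q hq d t _ hP2]
  -- split the weight product at s = t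
  have hins : univ.filter (fun s : Fin T => (s : ℕ) < (t : ℕ) + 1)
      = insert t (univ.filter (fun s : Fin T => (s : ℕ) < (t : ℕ))) := by
    ext s
    simp only [mem_filter, mem_univ, true_and, mem_insert]
    constructor
    · intro h
      rcases Nat.lt_or_ge (s : ℕ) (t : ℕ) with h' | h'
      · right; exact h'
      · left; exact Fin.ext (by omega)
    · rintro (rfl | h) <;> omega
  have hnm : t ∉ univ.filter (fun s : Fin T => (s : ℕ) < (t : ℕ)) := by simp
  have hW : ∀ y : Fin (T + 1) → S,
      μ (y 0) * ∏ s ∈ univ.filter (fun s : Fin T => (s : ℕ) < (t : ℕ) + 1),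
        K s (y s.castSucc) (y s.succ)
      = (μ (y 0) * ∏ s ∈ univ.filter (fun s : Fin T => (s : ℕ) < (t : ℕ)),
          K s (y s.castSucc) (y s.succ)) * K t (y t.castSucc) (y t.succ) := by
    intro y
    rw [hins, Finset.prod_insert hnm]
    ring
  rw [Finset.sum_congr rfl (fun y _ => hW y), Finset.sum_congr rfl (fun y _ => hW y)]
  -- LHS : restrict the values
  have hL : ∑ y ∈ univ.filter (fun y : Fin (T + 1) → S =>
        (∀ i : Fin (T + 1), (t : ℕ) + 1 < (i : ℕ) → y i = d) ∧
          y 0 = a ∧ y t.castSucc = z ∧ y t.succ = b),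
      (μ (y 0) * ∏ s ∈ univ.filter (fun s : Fin T => (s : ℕ) < (t : ℕ)),
          K s (y s.castSucc) (y s.succ)) * K t (y t.castSucc) (y t.succ)
      = (∑ y ∈ univ.filter (fun y : Fin (T + 1) → S =>
        (∀ i : Fin (T + 1), (t : ℕ) + 1 < (i : ℕ) → y i = d) ∧
          y 0 = a ∧ y t.castSucc = z ∧ y t.succ = b),
      (μ (y 0) * ∏ s ∈ univ.filter (fun s : Fin T => (s : ℕ) < (t : ℕ)),
          K s (y s.castSucc) (y s.succ))) * K t z b := by
    rw [Finset.sum_mul]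
    apply Finset.sum_congr rfl
    intro y hy
    simp only [mem_filter, mem_univ, true_and] at hy
    rw [hy.2.2.1, hy.2.2.2]
  rw [hL]
  congr 1
  -- RHS : fiber the 2-condition sum over the value at t.succ
  rw [← Finset.sum_fiberwise (univ.filter (fun y : Fin (T + 1) → S =>
      (∀ i : Fin (T + 1), (t : ℕ) + 1 < (i : ℕ) → y i = d) ∧
        y 0 = a ∧ y t.castSucc = z)) (fun y => y t.succ)
      (fun y => (μ (y 0) * ∏ s ∈ univ.filter (fun s : Fin T => (s : ℕ) < (t : ℕ)),
          K s (y s.castSucc) (y s.succ)) * K t (y t.castSucc) (y t.succ))]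
  have hfib : ∀ c : S, (univ.filter (fun y : Fin (T + 1) → S =>
      (∀ i : Fin (T + 1), (t : ℕ) + 1 < (i : ℕ) → y i = d) ∧
        y 0 = a ∧ y t.castSucc = z)).filter (fun y => y t.succ = c)
      = univ.filter (fun y : Fin (T + 1) → S =>
        (∀ i : Fin (T + 1), (t : ℕ) + 1 < (i : ℕ) → y i = d) ∧
          y 0 = a ∧ y t.castSucc = z ∧ y t.succ = c) := by
    intro c
    rw [Finset.filter_filter]
    apply Finset.filter_congr
    intro y _
    tauto
  have hstep : ∀ c : S, (∑ y ∈ (univ.filter (fun y : Fin (T + 1) → S =>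
      (∀ i : Fin (T + 1), (t : ℕ) + 1 < (i : ℕ) → y i = d) ∧
        y 0 = a ∧ y t.castSucc = z)).filter (fun y => y t.succ = c),
      (μ (y 0) * ∏ s ∈ univ.filter (fun s : Fin T => (s : ℕ) < (t : ℕ)),
          K s (y s.castSucc) (y s.succ)) * K t (y t.castSucc) (y t.succ))
      = (∑ y ∈ univ.filter (fun y : Fin (T + 1) → S =>
        (∀ i : Fin (T + 1), (t : ℕ) + 1 < (i : ℕ) → y i = d) ∧
          y 0 = a ∧ y t.castSucc = z ∧ y t.succ = b),
      (μ (y 0) * ∏ s ∈ univ.filter (fun s : Fin T => (s : ℕ) < (t : ℕ)),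
          K s (y s.castSucc) (y s.succ))) * K t z c := by
    intro c
    rw [hfib c]
    rw [Finset.sum_mul]
    have : ∀ y ∈ univ.filter (fun y : Fin (T + 1) → S =>
        (∀ i : Fin (T + 1), (t : ℕ) + 1 < (i : ℕ) → y i = d) ∧
          y 0 = a ∧ y t.castSucc = z ∧ y t.succ = c),
        (μ (y 0) * ∏ s ∈ univ.filter (fun s : Fin T => (s : ℕ) < (t : ℕ)),
          K s (y s.castSucc) (y s.succ)) * K t (y t.castSucc) (y t.succ)
        = (μ (y 0) * ∏ s ∈ univ.filter (fun s : Fin T => (s : ℕ) < (t : ℕ)),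
          K s (y s.castSucc) (y s.succ)) * K t z c := by
      intro y hy
      simp only [mem_filter, mem_univ, true_and] at hy
      rw [hy.2.2.1, hy.2.2.2]
    rw [Finset.sum_congr rfl this, ← Finset.sum_mul,
      shift_last μ K d t a z c b, Finset.sum_mul]
  rw [Finset.sum_congr rfl (fun c _ => hstep c), ← Finset.mul_sum, hK1 t z, mul_one]

lemma tele {n : ℕ} (hn : 0 < n) (g : Fin (n + 1) → ℝ) (hg : ∀ j, g j ≠ 0) :
    ∏ t ∈ univ.filter (fun t : Fin n => 1 ≤ (t : ℕ)), (g t.castSucc / g t.succ)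
      = g ⟨1, by omega⟩ / g (Fin.last n) := by
  have hinj1 : Set.InjOn (Fin.castSucc : Fin n → Fin (n + 1))
      (univ.filter (fun t : Fin n => 1 ≤ (t : ℕ))) :=
    fun a _ b _ h => Fin.castSucc_injective n h
  have hinj2 : Set.InjOn (Fin.succ : Fin n → Fin (n + 1))
      (univ.filter (fun t : Fin n => 1 ≤ (t : ℕ))) :=
    fun a _ b _ h => Fin.succ_injective n h
  have hA1 : univ.filter (fun j : Fin (n + 1) => 1 ≤ (j : ℕ))
      = insert (Fin.last n) ((univ.filter (fun t : Fin n => 1 ≤ (t : ℕ))).image Fin.castSucc) := by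
    ext j
    simp only [mem_filter, mem_univ, true_and, mem_insert, mem_image]
    constructor
    · intro hj
      by_cases hl : j = Fin.last n
      · left; exact hl
      · right
        have hjn : (j : ℕ) < n := by
          have h1 := j.isLt
          have h2 : (j : ℕ) ≠ n := fun hc => hl (Fin.ext (by simp [Fin.val_last, hc]))
          omega
        exact ⟨⟨(j : ℕ), hjn⟩, by simpa using hj, Fin.ext (by simp)⟩
    · rintro (rfl | ⟨t, ht, rfl⟩)
      · simp [Fin.val_last]; omega
      · simpa using ht
  have hA2 : univ.filter (fun j : Fin (n + 1) => 1 ≤ (j : ℕ))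
      = insert ⟨1, by omega⟩ ((univ.filter (fun t : Fin n => 1 ≤ (t : ℕ))).image Fin.succ) := by
    ext j
    simp only [mem_filter, mem_univ, true_and, mem_insert, mem_image]
    constructor
    · intro hj
      by_cases h1 : (j : ℕ) = 1
      · left; exact Fin.ext h1
      · right
        have hjn : (j : ℕ) - 1 < n := by have := j.isLt; omega
        exact ⟨⟨(j : ℕ) - 1, hjn⟩, by simp; omega, Fin.ext (by simp [Fin.val_succ]; omega)⟩
    · rintro (rfl | ⟨t, ht, rfl⟩)
      · simp
      · simp [Fin.val_succ]
  have hnm1 : Fin.last n ∉ (univ.filter (fun t : Fin n => 1 ≤ (t : ℕ))).image Fin.castSucc := by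
    intro h
    obtain ⟨t, -, hc⟩ := Finset.mem_image.mp h
    have h1 := congrArg Fin.val hc
    have h2 := t.isLt
    simp [Fin.val_last] at h1
    omega
  have hnm2 : (⟨1, by omega⟩ : Fin (n + 1)) ∉
      (univ.filter (fun t : Fin n => 1 ≤ (t : ℕ))).image Fin.succ := by
    intro h
    obtain ⟨t, ht, hc⟩ := Finset.mem_image.mp h
    simp only [mem_filter, mem_univ, true_and] at ht
    have h1 := congrArg Fin.val hc
    simp [Fin.val_succ] at h1
    omega
  have key : g (Fin.last n) * ∏ t ∈ univ.filter (fun t : Fin n => 1 ≤ (t : ℕ)), g t.castSucc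
      = g ⟨1, by omega⟩ * ∏ t ∈ univ.filter (fun t : Fin n => 1 ≤ (t : ℕ)), g t.succ := by
    have e1 : ∏ j ∈ univ.filter (fun j : Fin (n + 1) => 1 ≤ (j : ℕ)), g j
        = g (Fin.last n) * ∏ t ∈ univ.filter (fun t : Fin n => 1 ≤ (t : ℕ)), g t.castSucc := by
      rw [hA1, Finset.prod_insert hnm1, Finset.prod_image (fun a ha b hb h => hinj1 ha hb h)]
    have e2 : ∏ j ∈ univ.filter (fun j : Fin (n + 1) => 1 ≤ (j : ℕ)), g j
        = g ⟨1, by omega⟩ * ∏ t ∈ univ.filter (fun t : Fin n => 1 ≤ (t : ℕ)), g t.succ := by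
      rw [hA2, Finset.prod_insert hnm2, Finset.prod_image (fun a ha b hb h => hinj2 ha hb h)]
    rw [← e1, e2]
  rw [Finset.prod_div_distrib]
  have h1 : (∏ t ∈ univ.filter (fun t : Fin n => 1 ≤ (t : ℕ)), g t.castSucc) ≠ 0 :=
    Finset.prod_ne_zero_iff.mpr (fun t _ => hg _)
  have h2 : (∏ t ∈ univ.filter (fun t : Fin n => 1 ≤ (t : ℕ)), g t.succ) ≠ 0 :=
    Finset.prod_ne_zero_iff.mpr (fun t _ => hg _)
  rw [div_eq_div_iff h2 (hg (Fin.last n)), mul_comm]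
  exact key

lemma sum_mul_comp {α β : Type*} [Fintype α] [Fintype β] [DecidableEq β]
    (f : α → ℝ) (g : α → β) (F : β → ℝ) :
    ∑ x, f x * F (g x) = ∑ b, (∑ x ∈ univ.filter (fun x => g x = b), f x) * F b := by
  rw [← Finset.sum_fiberwise univ g (fun x => f x * F (g x))]
  refine Finset.sum_congr rfl fun b _ => ?_
  rw [Finset.sum_mul]
  refine Finset.sum_congr rfl fun x hx => ?_
  rw [(mem_filter.mp hx).2]

end Aux

/-- Decomposition of the variational lower bound (Eqs. 14–18 of the paper):
for a strictly positive forward chain `q` and a strictly positive generative law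
`p x = π (x_T) * ∏ t, R t (x_{t+1}) (x_t)`,
`E_q[log (p(X_{0:T}) / q(X_{1:T} ∣ X_0))]
  = E_q[log R_1(X_1)(X_0)]
    − ∑_{t=2}^T E_q[D(q(X_{t−1} ∈ · ∣ X_t, X_0) ‖ R_t(X_t))]
    − E_μ[D(q(X_T ∈ · ∣ X_0) ‖ π)]`.
Here steps are indexed by `t : Fin T`: step `t` relates time `t.castSucc` (= t−1 of the
1-based paper notation) and time `t.succ` (= t); the reconstruction term corresponds to
the step with `(t : ℕ) = 0` and the per-step KL terms to the steps with `1 ≤ (t : ℕ)`.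
`post t a b` is the forward-chain posterior `q(X_{t−1} ∈ · ∣ X_t = b, X_0 = a)` and
`condT a` is `q(X_T ∈ · ∣ X_0 = a)`. -/
theorem vlb_decomposition
    (S : Type) [Fintype S] [DecidableEq S] (T : ℕ) (hT : 0 < T)
    (μ : S → ℝ) (hμ0 : ∀ x, 0 ≤ μ x) (hμ1 : ∑ x, μ x = 1)
    (K : Fin T → S → S → ℝ)
    (hK0 : ∀ t x y, 0 ≤ K t x y) (hK1 : ∀ t x, ∑ y, K t x y = 1)
    (q : (Fin (T + 1) → S) → ℝ)
    (hq : ∀ x, q x = μ (x 0) * ∏ s : Fin T, K s (x s.castSucc) (x s.succ))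
    (hqpos : ∀ x, 0 < q x)
    (π : S → ℝ) (hπ0 : ∀ y, 0 < π y) (hπ1 : ∑ y, π y = 1)
    (R : Fin T → S → S → ℝ)
    (hR0 : ∀ t x y, 0 < R t x y) (hR1 : ∀ t x, ∑ y, R t x y = 1)
    (p : (Fin (T + 1) → S) → ℝ)
    (hp : ∀ x, p x = π (x (Fin.last T)) *
        ∏ t : Fin T, R t (x t.succ) (x t.castSucc))
    (post : Fin T → S → S → S → ℝ)
    (hpost : ∀ (t : Fin T) (a b z : S), post t a b z =
      (∑ x ∈ univ.filter (fun x : Fin (T + 1) → S =>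
          x 0 = a ∧ x t.castSucc = z ∧ x t.succ = b), q x)
        / (∑ x ∈ univ.filter
            (fun x : Fin (T + 1) → S => x 0 = a ∧ x t.succ = b), q x))
    (condT : S → S → ℝ)
    (hcondT : ∀ a b, condT a b =
      (∑ x ∈ univ.filter
          (fun x : Fin (T + 1) → S => x 0 = a ∧ x (Fin.last T) = b), q x) / μ a) :
    (∑ x, q x * Real.log (p x / (q x / μ (x 0))))
      = (∑ x, q x * Real.log (R ⟨0, hT⟩ (x (⟨0, hT⟩ : Fin T).succ)
            (x (⟨0, hT⟩ : Fin T).castSucc)))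
        - (∑ t ∈ univ.filter (fun t : Fin T => 1 ≤ (t : ℕ)),
            ∑ x, q x * KLdiv (post t (x 0) (x t.succ)) (R t (x t.succ)))
        - (∑ a, μ a * KLdiv (condT a) (π)) := by
  have hS : Nonempty S := by
    by_contra h
    rw [not_nonempty_iff] at h
    rw [Finset.univ_eq_empty, Finset.sum_empty] at hμ1
    exact one_ne_zero hμ1.symm
  obtain ⟨d⟩ := hS
  set t0 : Fin T := ⟨0, hT⟩ with ht0
  have hμpos : ∀ a, 0 < μ a := by
    intro a
    have h := hqpos (fun _ => a)
    rw [hq] at h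
    by_contra hc
    push_neg at hc
    have hpn : (0:ℝ) ≤ ∏ s : Fin T, K s ((fun _ => a) s.castSucc) ((fun _ => a) s.succ) :=
      Finset.prod_nonneg (fun s _ => hK0 s _ _)
    nlinarith
  have hKpos : ∀ (t : Fin T) (z b : S), 0 < K t z b := by
    intro t z b
    set w : Fin (T + 1) → S := fun i => if (i : ℕ) ≤ (t : ℕ) then z else b with hw
    have h := hqpos w
    rw [hq] at h
    by_contra hc
    push_neg at hc
    have hKzb : K t z b = 0 := le_antisymm hc (hK0 t z b)
    have hwt : w t.castSucc = z := by simp [hw]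
    have hwt' : w t.succ = b := by simp [hw, Fin.val_succ]
    have hz : (∏ s : Fin T, K s (w s.castSucc) (w s.succ)) = 0 :=
      Finset.prod_eq_zero (Finset.mem_univ t) (by rw [hwt, hwt', hKzb])
    rw [hz, mul_zero] at h
    exact lt_irrefl 0 h
  set nstep : Fin T → S → S → S → ℝ := fun t a z b =>
    ∑ x ∈ univ.filter (fun x : Fin (T + 1) → S =>
      x 0 = a ∧ x t.castSucc = z ∧ x t.succ = b), q x with hnstep
  set mstep : Fin T → S → S → ℝ := fun t a b =>
    ∑ x ∈ univ.filter (fun x : Fin (T + 1) → S => x 0 = a ∧ x t.succ = b), q x with hmstep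
  set mcast : Fin T → S → S → ℝ := fun t a z =>
    ∑ x ∈ univ.filter (fun x : Fin (T + 1) → S => x 0 = a ∧ x t.castSucc = z), q x with hmcast
  set mlast : S → S → ℝ := fun a b =>
    ∑ x ∈ univ.filter (fun x : Fin (T + 1) → S =>
      x 0 = a ∧ x (Fin.last T) = b), q x with hmlast
  have hpost' : ∀ t a b z, post t a b z = nstep t a z b / mstep t a b := by
    intro t a b z
    rw [hpost]
  have hcondT' : ∀ a b, condT a b = mlast a b / μ a := by
    intro a b
    rw [hcondT]
  have hmstep_pos : ∀ t a b, 0 < mstep t a b := by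
    intro t a b
    simp only [hmstep]
    apply Finset.sum_pos (fun x _ => hqpos x)
    refine ⟨fun i => if i = 0 then a else b, Finset.mem_filter.mpr ⟨Finset.mem_univ _, ?_, ?_⟩⟩
    · simp
    · show (if t.succ = (0 : Fin (T + 1)) then a else b) = b
      rw [if_neg (Fin.succ_ne_zero t)]
  have hnstep_pos : ∀ (t : Fin T), 1 ≤ (t : ℕ) → ∀ a z b, 0 < nstep t a z b := by
    intro t ht a z b
    have hc0 : t.castSucc ≠ 0 := by
      intro hc
      have := congrArg Fin.val hc
      simp at this
      omega
    have hs0 : t.succ ≠ 0 := Fin.succ_ne_zero t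
    have hsc : t.succ ≠ t.castSucc := by
      intro hc
      have := congrArg Fin.val hc
      simp [Fin.val_succ] at this
    simp only [hnstep]
    apply Finset.sum_pos (fun x _ => hqpos x)
    refine ⟨fun i => if i = 0 then a else if i = t.castSucc then z else b,
      Finset.mem_filter.mpr ⟨Finset.mem_univ _, ?_, ?_, ?_⟩⟩
    · simp
    · show (if t.castSucc = (0 : Fin (T + 1)) then a else if t.castSucc = t.castSucc then z else b) = z
      rw [if_neg hc0, if_pos rfl]
    · show (if t.succ = (0 : Fin (T + 1)) then a else if t.succ = t.castSucc then z else b) = b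
      rw [if_neg hs0, if_neg hsc]
  have hmlast_pos : ∀ a b, 0 < mlast a b := by
    intro a b
    have hl0 : (Fin.last T) ≠ (0 : Fin (T + 1)) := by
      intro hc
      have := congrArg Fin.val hc
      simp [Fin.val_last] at this
      omega
    simp only [hmlast]
    apply Finset.sum_pos (fun x _ => hqpos x)
    refine ⟨fun i => if i = 0 then a else b, Finset.mem_filter.mpr ⟨Finset.mem_univ _, ?_, ?_⟩⟩
    · simp
    · show (if (Fin.last T) = (0 : Fin (T + 1)) then a else b) = b
      rw [if_neg hl0]
  have hcondT_pos : ∀ a b, 0 < condT a b := by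
    intro a b
    rw [hcondT']
    exact div_pos (hmlast_pos a b) (hμpos a)
  have hpost_pos : ∀ (t : Fin T), 1 ≤ (t : ℕ) → ∀ a b z, 0 < post t a b z := by
    intro t ht a b z
    rw [hpost']
    exact div_pos (hnstep_pos t ht a z b) (hmstep_pos t a b)
  have hF1 : ∀ t a z b, nstep t a z b = mcast t a z * K t z b := by
    intro t a z b
    simp only [hnstep, hmcast]
    exact step_marginal μ K hK1 q hq d t a z b
  have hF2 : ∀ t a b, mstep t a b = ∑ z, nstep t a z b := by
    intro t a b
    simp only [hmstep, hnstep]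
    rw [← Finset.sum_fiberwise (univ.filter (fun x : Fin (T + 1) → S =>
      x 0 = a ∧ x t.succ = b)) (fun x => x t.castSucc) q]
    apply Finset.sum_congr rfl
    intro z _
    rw [Finset.filter_filter]
    apply Finset.sum_congr ?_ (fun _ _ => rfl)
    apply Finset.filter_congr
    intro x _
    constructor
    · tauto
    · tauto
  have hmlast_eq : ∀ a b, mlast a b = μ a * condT a b := by
    intro a b
    rw [hcondT', mul_div_cancel₀ _ (ne_of_gt (hμpos a))]
  have m1 : ∀ a b, mstep t0 a b = μ a * K t0 a b := by
    intro a b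
    have hc00 : (t0.castSucc : Fin (T + 1)) = 0 := Fin.ext (by simp [ht0])
    have hmc : ∀ z, mcast t0 a z = if z = a then μ a else 0 := by
      intro z
      simp only [hmcast, hc00]
      by_cases hz : z = a
      · rw [if_pos hz]
        subst hz
        rw [show univ.filter (fun x : Fin (T + 1) → S => x 0 = z ∧ x 0 = z)
            = univ.filter (fun x : Fin (T + 1) → S => x 0 = z) from
          Finset.filter_congr (fun x _ => by tauto)]
        exact first_marginal μ K hK1 q hq z
      · rw [if_neg hz]
        rw [show univ.filter (fun x : Fin (T + 1) → S => x 0 = a ∧ x 0 = z) = ∅ by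
          ext x
          simp only [mem_filter, mem_univ, true_and, notMem_empty, iff_false, not_and]
          intro h1 h2
          exact hz (h2 ▸ h1 ▸ rfl)]
        exact Finset.sum_empty
    rw [hF2]
    rw [Finset.sum_congr rfl (fun z (_ : z ∈ univ) => by
      rw [hF1 t0 a z b, hmc z, ite_mul, zero_mul])]
    rw [Finset.sum_ite_eq' univ a (fun z => μ a * K t0 z b)]
    simp
  have hchain : ∀ x : Fin (T + 1) → S,
      q x / μ (x 0) = condT (x 0) (x (Fin.last T)) *
        ∏ t ∈ univ.filter (fun t : Fin T => 1 ≤ (t : ℕ)),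
          post t (x 0) (x t.succ) (x t.castSucc) := by
    intro x
    set g : Fin (T + 1) → ℝ := fun i =>
      ∑ x' ∈ univ.filter (fun x' : Fin (T + 1) → S => x' 0 = x 0 ∧ x' i = x i), q x' with hg
    have hg_pos : ∀ i, 0 < g i := by
      intro i
      simp only [hg]
      exact Finset.sum_pos (fun x' _ => hqpos x')
        ⟨x, Finset.mem_filter.mpr ⟨Finset.mem_univ x, rfl, rfl⟩⟩
    have hgc : ∀ t : Fin T, mcast t (x 0) (x t.castSucc) = g t.castSucc := by
      intro t; simp only [hmcast, hg]
    have hgs : ∀ t : Fin T, mstep t (x 0) (x t.succ) = g t.succ := by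
      intro t; simp only [hmstep, hg]
    have hgl : mlast (x 0) (x (Fin.last T)) = g (Fin.last T) := by
      simp only [hmlast, hg]
    have hpp : ∀ t ∈ univ.filter (fun t : Fin T => 1 ≤ (t : ℕ)),
        post t (x 0) (x t.succ) (x t.castSucc)
        = (g t.castSucc / g t.succ) * K t (x t.castSucc) (x t.succ) := by
      intro t _
      rw [hpost', hF1, hgc, hgs]
      field_simp
    rw [Finset.prod_congr rfl hpp, Finset.prod_mul_distrib,
      tele hT g (fun j => ne_of_gt (hg_pos j))]
    have huniv : (univ : Finset (Fin T))
        = insert t0 (univ.filter (fun t : Fin T => 1 ≤ (t : ℕ))) := by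
      ext s
      simp only [mem_univ, mem_insert, mem_filter, true_and, true_iff]
      rcases Nat.eq_zero_or_pos (s : ℕ) with h | h
      · left; exact Fin.ext (by simp [ht0, h])
      · right; omega
    have ht0nm : t0 ∉ univ.filter (fun t : Fin T => 1 ≤ (t : ℕ)) := by
      simp [ht0]
    have hone : ∀ (h : 1 < T + 1), g ⟨1, h⟩ = μ (x 0) * K t0 (x 0) (x t0.succ) := by
      intro h
      have h1 : (⟨1, h⟩ : Fin (T + 1)) = t0.succ := Fin.ext (by simp [ht0, Fin.val_succ])
      rw [h1, ← hgs t0, m1]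
    have hlast1 : x t0.castSucc = x 0 := by
      have h0 : (t0.castSucc : Fin (T + 1)) = 0 := Fin.ext (by simp [ht0])
      rw [h0]
    have hqeq : q x = μ (x 0) * K t0 (x 0) (x t0.succ) *
        (∏ t ∈ univ.filter (fun t : Fin T => 1 ≤ (t : ℕ)),
          K t (x t.castSucc) (x t.succ)) := by
      rw [hq x]
      conv_lhs => rw [huniv]
      rw [Finset.prod_insert ht0nm, hlast1]
      ring
    rw [hcondT', hgl, hone, hqeq]
    have e1 : g (Fin.last T) ≠ 0 := ne_of_gt (hg_pos _)
    have e2 : μ (x 0) ≠ 0 := ne_of_gt (hμpos _)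
    have e3 : K t0 (x 0) (x t0.succ) ≠ 0 := ne_of_gt (hKpos _ _ _)
    field_simp
  have hKL_post : ∀ (t : Fin T), 1 ≤ (t : ℕ) → ∀ a b,
      KLdiv (post t a b) (R t b)
      = ∑ z, post t a b z * (Real.log (post t a b z) - Real.log (R t b z)) := by
    intro t ht a b
    unfold KLdiv
    rw [Finset.filter_true_of_mem (fun z _ => hpost_pos t ht a b z)]
    refine Finset.sum_congr rfl fun z _ => ?_
    rw [Real.log_div (ne_of_gt (hpost_pos t ht a b z)) (ne_of_gt (hR0 t b z))]
  have hKL_cond : ∀ a, KLdiv (condT a) π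
      = ∑ b, condT a b * (Real.log (condT a b) - Real.log (π b)) := by
    intro a
    unfold KLdiv
    rw [Finset.filter_true_of_mem (fun b _ => hcondT_pos a b)]
    refine Finset.sum_congr rfl fun b _ => ?_
    rw [Real.log_div (ne_of_gt (hcondT_pos a b)) (ne_of_gt (hπ0 b))]
  have huniv : (univ : Finset (Fin T))
      = insert t0 (univ.filter (fun t : Fin T => 1 ≤ (t : ℕ))) := by
    ext s
    simp only [mem_univ, mem_insert, mem_filter, true_and, true_iff]
    rcases Nat.eq_zero_or_pos (s : ℕ) with h | h
    · left; exact Fin.ext (by simp [ht0, h])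
    · right; omega
  have ht0nm : t0 ∉ univ.filter (fun t : Fin T => 1 ≤ (t : ℕ)) := by simp [ht0]
  have hlog : ∀ x : Fin (T + 1) → S, q x * Real.log (p x / (q x / μ (x 0)))
      = q x * Real.log (R t0 (x t0.succ) (x t0.castSucc))
        - (∑ t ∈ univ.filter (fun t : Fin T => 1 ≤ (t : ℕ)),
            q x * (Real.log (post t (x 0) (x t.succ) (x t.castSucc))
              - Real.log (R t (x t.succ) (x t.castSucc))))
        - q x * (Real.log (condT (x 0) (x (Fin.last T)))
              - Real.log (π (x (Fin.last T)))) := by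
    intro x
    have hp_pos : 0 < p x := by
      rw [hp x]
      exact mul_pos (hπ0 _) (Finset.prod_pos fun t _ => hR0 t _ _)
    have hqm_pos : 0 < q x / μ (x 0) := div_pos (hqpos x) (hμpos _)
    have hlog1 : Real.log (p x) = Real.log (π (x (Fin.last T)))
        + (Real.log (R t0 (x t0.succ) (x t0.castSucc))
        + ∑ t ∈ univ.filter (fun t : Fin T => 1 ≤ (t : ℕ)),
            Real.log (R t (x t.succ) (x t.castSucc))) := by
      rw [hp x, Real.log_mul (ne_of_gt (hπ0 _))
        (ne_of_gt (Finset.prod_pos fun t _ => hR0 t _ _)),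
        Real.log_prod (fun t _ => ne_of_gt (hR0 t _ _))]
      conv_lhs => rw [huniv]
      rw [Finset.sum_insert ht0nm]
    have hlog2 : Real.log (q x / μ (x 0))
        = Real.log (condT (x 0) (x (Fin.last T)))
        + ∑ t ∈ univ.filter (fun t : Fin T => 1 ≤ (t : ℕ)),
            Real.log (post t (x 0) (x t.succ) (x t.castSucc)) := by
      rw [hchain x, Real.log_mul (ne_of_gt (hcondT_pos _ _))
        (ne_of_gt (Finset.prod_pos fun t htm => hpost_pos t (by
          simpa using (Finset.mem_filter.mp htm).2) _ _ _)),
        Real.log_prod (fun t htm => ne_of_gt (hpost_pos t (by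
          simpa using (Finset.mem_filter.mp htm).2) _ _ _))]
    have hmid : (∑ t ∈ univ.filter (fun t : Fin T => 1 ≤ (t : ℕ)),
          q x * (Real.log (post t (x 0) (x t.succ) (x t.castSucc))
            - Real.log (R t (x t.succ) (x t.castSucc))))
        = q x * ((∑ t ∈ univ.filter (fun t : Fin T => 1 ≤ (t : ℕ)),
            Real.log (post t (x 0) (x t.succ) (x t.castSucc)))
          - ∑ t ∈ univ.filter (fun t : Fin T => 1 ≤ (t : ℕ)),
            Real.log (R t (x t.succ) (x t.castSucc))) := by
      rw [← Finset.sum_sub_distrib, ← Finset.mul_sum]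
    rw [Real.log_div (ne_of_gt hp_pos) (ne_of_gt hqm_pos), hlog1, hlog2, hmid]
    ring
  have claimA : ∀ t ∈ univ.filter (fun t : Fin T => 1 ≤ (t : ℕ)),
      (∑ x : Fin (T + 1) → S,
        q x * (Real.log (post t (x 0) (x t.succ) (x t.castSucc))
          - Real.log (R t (x t.succ) (x t.castSucc))))
      = ∑ x : Fin (T + 1) → S,
          q x * KLdiv (post t (x 0) (x t.succ)) (R t (x t.succ)) := by
    intro t htm
    have ht : 1 ≤ (t : ℕ) := by simpa using (Finset.mem_filter.mp htm).2
    have hfib3 : ∀ a z b : S,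
        univ.filter (fun x : Fin (T + 1) → S => (x 0, x t.castSucc, x t.succ) = (a, z, b))
        = univ.filter (fun x : Fin (T + 1) → S =>
            x 0 = a ∧ x t.castSucc = z ∧ x t.succ = b) := by
      intro a z b
      apply Finset.filter_congr
      intro x _
      simp [Prod.ext_iff]
    have hfib2 : ∀ a b : S,
        univ.filter (fun x : Fin (T + 1) → S => (x 0, x t.succ) = (a, b))
        = univ.filter (fun x : Fin (T + 1) → S => x 0 = a ∧ x t.succ = b) := by
      intro a b
      apply Finset.filter_congr
      intro x _
      simp [Prod.ext_iff]
    calc (∑ x : Fin (T + 1) → S,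
        q x * (Real.log (post t (x 0) (x t.succ) (x t.castSucc))
          - Real.log (R t (x t.succ) (x t.castSucc))))
        = ∑ y : S × S × S, (∑ x ∈ univ.filter (fun x : Fin (T + 1) → S =>
              (x 0, x t.castSucc, x t.succ) = y), q x) *
            (Real.log (post t y.1 y.2.2 y.2.1) - Real.log (R t y.2.2 y.2.1)) :=
          sum_mul_comp q (fun x : Fin (T + 1) → S => (x 0, x t.castSucc, x t.succ))
            (fun y : S × S × S => Real.log (post t y.1 y.2.2 y.2.1)
              - Real.log (R t y.2.2 y.2.1))
      _ = ∑ a : S, ∑ z : S, ∑ b : S, nstep t a z b *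
            (Real.log (post t a b z) - Real.log (R t b z)) := by
          rw [Fintype.sum_prod_type]
          refine Finset.sum_congr rfl fun a _ => ?_
          rw [Fintype.sum_prod_type]
          refine Finset.sum_congr rfl fun z _ => Finset.sum_congr rfl fun b _ => ?_
          rw [hfib3 a z b]
      _ = ∑ a : S, ∑ b : S, ∑ z : S, nstep t a z b *
            (Real.log (post t a b z) - Real.log (R t b z)) := by
          refine Finset.sum_congr rfl fun a _ => ?_
          exact Finset.sum_comm
      _ = ∑ a : S, ∑ b : S, mstep t a b * KLdiv (post t a b) (R t b) := by
          refine Finset.sum_congr rfl fun a _ => Finset.sum_congr rfl fun b _ => ?_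
          rw [hKL_post t ht a b, Finset.mul_sum]
          refine Finset.sum_congr rfl fun z _ => ?_
          have hmn : mstep t a b * post t a b z = nstep t a z b := by
            rw [hpost' t a b z, mul_div_cancel₀ _ (ne_of_gt (hmstep_pos t a b))]
          rw [← mul_assoc, hmn]
      _ = ∑ y : S × S, (∑ x ∈ univ.filter (fun x : Fin (T + 1) → S =>
              (x 0, x t.succ) = y), q x) * KLdiv (post t y.1 y.2) (R t y.2) := by
          rw [Fintype.sum_prod_type]
          refine Finset.sum_congr rfl fun a _ => Finset.sum_congr rfl fun b _ => ?_
          rw [hfib2 a b]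
      _ = ∑ x : Fin (T + 1) → S,
          q x * KLdiv (post t (x 0) (x t.succ)) (R t (x t.succ)) :=
          (sum_mul_comp q (fun x : Fin (T + 1) → S => (x 0, x t.succ))
            (fun y : S × S => KLdiv (post t y.1 y.2) (R t y.2))).symm
  have claimB : (∑ x : Fin (T + 1) → S,
        q x * (Real.log (condT (x 0) (x (Fin.last T)))
          - Real.log (π (x (Fin.last T)))))
      = ∑ a, μ a * KLdiv (condT a) π := by
    have hfib2 : ∀ a b : S,
        univ.filter (fun x : Fin (T + 1) → S => (x 0, x (Fin.last T)) = (a, b))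
        = univ.filter (fun x : Fin (T + 1) → S => x 0 = a ∧ x (Fin.last T) = b) := by
      intro a b
      apply Finset.filter_congr
      intro x _
      simp [Prod.ext_iff]
    calc (∑ x : Fin (T + 1) → S,
        q x * (Real.log (condT (x 0) (x (Fin.last T)))
          - Real.log (π (x (Fin.last T)))))
        = ∑ y : S × S, (∑ x ∈ univ.filter (fun x : Fin (T + 1) → S =>
              (x 0, x (Fin.last T)) = y), q x) *
            (Real.log (condT y.1 y.2) - Real.log (π y.2)) :=
          sum_mul_comp q (fun x : Fin (T + 1) → S => (x 0, x (Fin.last T)))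
            (fun y : S × S => Real.log (condT y.1 y.2) - Real.log (π y.2))
      _ = ∑ a : S, ∑ b : S, mlast a b * (Real.log (condT a b) - Real.log (π b)) := by
          rw [Fintype.sum_prod_type]
          refine Finset.sum_congr rfl fun a _ => Finset.sum_congr rfl fun b _ => ?_
          rw [hfib2 a b]
      _ = ∑ a, μ a * KLdiv (condT a) π := by
          refine Finset.sum_congr rfl fun a _ => ?_
          rw [hKL_cond a, Finset.mul_sum]
          refine Finset.sum_congr rfl fun b _ => ?_
          rw [hmlast_eq a b]
          ring
  calc (∑ x, q x * Real.log (p x / (q x / μ (x 0))))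
      = ∑ x : Fin (T + 1) → S,
          (q x * Real.log (R t0 (x t0.succ) (x t0.castSucc))
          - (∑ t ∈ univ.filter (fun t : Fin T => 1 ≤ (t : ℕ)),
              q x * (Real.log (post t (x 0) (x t.succ) (x t.castSucc))
                - Real.log (R t (x t.succ) (x t.castSucc))))
          - q x * (Real.log (condT (x 0) (x (Fin.last T)))
                - Real.log (π (x (Fin.last T))))) :=
        Finset.sum_congr rfl fun x _ => hlog x
    _ = (∑ x, q x * Real.log (R t0 (x t0.succ) (x t0.castSucc)))
        - (∑ t ∈ univ.filter (fun t : Fin T => 1 ≤ (t : ℕ)),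
            ∑ x : Fin (T + 1) → S,
              q x * (Real.log (post t (x 0) (x t.succ) (x t.castSucc))
                - Real.log (R t (x t.succ) (x t.castSucc))))
        - (∑ x : Fin (T + 1) → S,
            q x * (Real.log (condT (x 0) (x (Fin.last T)))
                - Real.log (π (x (Fin.last T))))) := by
        rw [Finset.sum_sub_distrib, Finset.sum_sub_distrib, Finset.sum_comm]
    _ = (∑ x, q x * Real.log (R t0 (x t0.succ) (x t0.castSucc)))
        - (∑ t ∈ univ.filter (fun t : Fin T => 1 ≤ (t : ℕ)),
            ∑ x, q x * KLdiv (post t (x 0) (x t.succ)) (R t (x t.succ)))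
        - (∑ a, μ a * KLdiv (condT a) (π)) := by
        rw [Finset.sum_congr rfl claimA, claimB]
end
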